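/- Let V be a finite-dimensional real inner product space, L₁, L₂ : V → V positive semi-definite self-adjoint linear operators, f₁, f₂ > 0 real numbers, and E₀ ∈ V. Let π be the orthogonal projection onto Range L₁ ∩ Range L₂. Then the minimum of f₁⟨E₁, L₁E₁⟩ + f₂⟨E₂, L₂E₂⟩ over all E₁, E₂ ∈ V with f₁E₁ + f₂E₂ = E₀ equals ⟨πE₀, [π(f₁L₁⁻¹ + f₂L₂⁻¹)π]⁻¹ πE₀⟩, where all inverses are Moore–Penrose pseudo-inverses. -/

import Mathlib

open scoped RealInnerProductSpace

/-- The Moore–Penrose pseudo-inverse conditions for linear operators on a real inner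
product space: `LML = L`, `MLM = M`, and both `LM` and `ML` are self-adjoint. -/
def IsMoorePenroseInv {V : Type*} [NormedAddCommGroup V] [InnerProductSpace ℝ V]
    (L M : V →ₗ[ℝ] V) : Prop :=
  L ∘ₗ M ∘ₗ L = L ∧ M ∘ₗ L ∘ₗ M = M ∧
    (L ∘ₗ M).IsSymmetric ∧ (M ∘ₗ L).IsSymmetric


section Aux
variable {V : Type*} [NormedAddCommGroup V] [InnerProductSpace ℝ V] [FiniteDimensional ℝ V]

lemma sym_adj {T : V →ₗ[ℝ] V} (h : T.IsSymmetric) : LinearMap.adjoint T = T := by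
  symm; rw [LinearMap.eq_adjoint_iff]; exact h

lemma mp_unique (L M N : V →ₗ[ℝ] V) (hM : IsMoorePenroseInv L M)
    (hN : IsMoorePenroseInv L N) : M = N := by
  obtain ⟨hM1, hM2, hM3, hM4⟩ := hM
  obtain ⟨hN1, hN2, hN3, hN4⟩ := hN
  have hLM : L ∘ₗ M = L ∘ₗ N := by
    calc L ∘ₗ M = LinearMap.adjoint (L ∘ₗ M) := (sym_adj hM3).symm
    _ = LinearMap.adjoint ((L ∘ₗ N ∘ₗ L) ∘ₗ M) := by rw [hN1]
    _ = LinearMap.adjoint (L ∘ₗ M) ∘ₗ LinearMap.adjoint (L ∘ₗ N) := by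
        rw [← LinearMap.adjoint_comp]; congr 1 <;> simp [LinearMap.comp_assoc]
    _ = (L ∘ₗ M) ∘ₗ (L ∘ₗ N) := by rw [sym_adj hM3, sym_adj hN3]
    _ = (L ∘ₗ M ∘ₗ L) ∘ₗ N := by simp [LinearMap.comp_assoc]
    _ = L ∘ₗ N := by rw [hM1]
  have hML : M ∘ₗ L = N ∘ₗ L := by
    calc M ∘ₗ L = LinearMap.adjoint (M ∘ₗ L) := (sym_adj hM4).symm
    _ = LinearMap.adjoint (M ∘ₗ (L ∘ₗ N ∘ₗ L)) := by rw [hN1]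
    _ = LinearMap.adjoint (N ∘ₗ L) ∘ₗ LinearMap.adjoint (M ∘ₗ L) := by
        rw [← LinearMap.adjoint_comp]; congr 1 <;> simp [LinearMap.comp_assoc]
    _ = (N ∘ₗ L) ∘ₗ (M ∘ₗ L) := by rw [sym_adj hM4, sym_adj hN4]
    _ = N ∘ₗ (L ∘ₗ M ∘ₗ L) := by simp [LinearMap.comp_assoc]
    _ = N ∘ₗ L := by rw [hM1]
  calc M = M ∘ₗ L ∘ₗ M := hM2.symm
  _ = (N ∘ₗ L) ∘ₗ M := by rw [← hML]; simp [LinearMap.comp_assoc]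
  _ = N ∘ₗ (L ∘ₗ N) := by rw [LinearMap.comp_assoc, hLM]
  _ = N := hN2

lemma mp_adjoint (L M : V →ₗ[ℝ] V) (h : IsMoorePenroseInv L M) :
    IsMoorePenroseInv (LinearMap.adjoint L) (LinearMap.adjoint M) := by
  obtain ⟨h1, h2, h3, h4⟩ := h
  refine ⟨?_, ?_, ?_, ?_⟩
  · calc LinearMap.adjoint L ∘ₗ LinearMap.adjoint M ∘ₗ LinearMap.adjoint L
        = LinearMap.adjoint (L ∘ₗ M ∘ₗ L) := by
          simp [LinearMap.adjoint_comp, LinearMap.comp_assoc]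
    _ = LinearMap.adjoint L := by rw [h1]
  · calc LinearMap.adjoint M ∘ₗ LinearMap.adjoint L ∘ₗ LinearMap.adjoint M
        = LinearMap.adjoint (M ∘ₗ L ∘ₗ M) := by
          simp [LinearMap.adjoint_comp, LinearMap.comp_assoc]
    _ = LinearMap.adjoint M := by rw [h2]
  · have e : LinearMap.adjoint L ∘ₗ LinearMap.adjoint M = LinearMap.adjoint (M ∘ₗ L) := by
      rw [LinearMap.adjoint_comp]
    rw [e, sym_adj h4]; exact h4
  · have e : LinearMap.adjoint M ∘ₗ LinearMap.adjoint L = LinearMap.adjoint (L ∘ₗ M) := by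
      rw [LinearMap.adjoint_comp]
    rw [e, sym_adj h3]; exact h3

lemma mp_symm (L M : V →ₗ[ℝ] V) (hL : L.IsSymmetric) (h : IsMoorePenroseInv L M) :
    M.IsSymmetric := by
  have h' := mp_adjoint L M h
  rw [sym_adj hL] at h'
  have e : M = LinearMap.adjoint M := mp_unique L M _ h h'
  intro x y
  conv_lhs => rw [e]
  exact LinearMap.adjoint_inner_left M y x

lemma psd_zero (T : V →ₗ[ℝ] V) (hT : T.IsSymmetric) (hpos : ∀ x, 0 ≤ ⟪x, T x⟫)
    {w : V} (hw : ⟪w, T w⟫ = 0) : T w = 0 := by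
  have key : ∀ y : V, ⟪y, T w⟫ = 0 := by
    intro y
    have hsym : ⟪y, T w⟫ = ⟪w, T y⟫ := by rw [← hT y w, real_inner_comm]
    have hq : ∀ t : ℝ, 0 ≤ ⟪y, T y⟫ * (t * t) + (2 * ⟪y, T w⟫) * t + 0 := by
      intro t
      have h0 := hpos (w + t • y)
      have e1 : ⟪w + t • y, T (w + t • y)⟫
          = ⟪w, T w⟫ + t * ⟪w, T y⟫ + t * ⟪y, T w⟫ + t * t * ⟪y, T y⟫ := by
        simp only [map_add, map_smul, inner_add_left, inner_add_right,
          real_inner_smul_left, real_inner_smul_right]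
        ring
      rw [e1, hw, ← hsym] at h0
      nlinarith [h0]
    have hd := discrim_le_zero hq
    have hd' : (2 * ⟪y, T w⟫) ^ 2 ≤ 0 := by
      simpa [discrim] using hd
    nlinarith [sq_nonneg (2 * ⟪y, T w⟫)]
  have h2 := key (T w)
  rwa [real_inner_self_eq_norm_sq, pow_eq_zero_iff (by norm_num), norm_eq_zero] at h2

lemma ker_eq_range_orth (L : V →ₗ[ℝ] V) (hL : L.IsSymmetric) :
    LinearMap.ker L = (LinearMap.range L)ᗮ := by
  ext x
  simp only [LinearMap.mem_ker, Submodule.mem_orthogonal]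
  constructor
  · rintro hx u ⟨y, rfl⟩
    rw [hL y x, hx, inner_zero_right]
  · intro hx
    have h1 : ⟪L x, L x⟫ = 0 := by
      rw [hL x (L x), real_inner_comm]
      exact hx (L (L x)) ⟨L x, rfl⟩
    rwa [real_inner_self_eq_norm_sq, pow_eq_zero_iff (by norm_num), norm_eq_zero] at h1

end Aux

/-- The minimum of `f₁⟨E₁, L₁E₁⟩ + f₂⟨E₂, L₂E₂⟩` over `f₁E₁ + f₂E₂ = E₀` equals
`⟨πE₀, [π(f₁L₁⁻¹ + f₂L₂⁻¹)π]⁻¹ πE₀⟩`, where `π` is the orthogonal projection onto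
`Range L₁ ∩ Range L₂` and the inverses are Moore–Penrose pseudo-inverses. -/
theorem stmt_0 {V : Type*} [NormedAddCommGroup V] [InnerProductSpace ℝ V]
    [FiniteDimensional ℝ V]
    (L₁ L₂ : V →ₗ[ℝ] V) (hL₁ : L₁.IsSymmetric) (hL₂ : L₂.IsSymmetric)
    (hL₁pos : ∀ x : V, 0 ≤ ⟪x, L₁ x⟫) (hL₂pos : ∀ x : V, 0 ≤ ⟪x, L₂ x⟫)
    (f₁ f₂ : ℝ) (hf₁ : 0 < f₁) (hf₂ : 0 < f₂) (E₀ : V)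
    (M₁ M₂ : V →ₗ[ℝ] V) (hM₁ : IsMoorePenroseInv L₁ M₁) (hM₂ : IsMoorePenroseInv L₂ M₂)
    (π : V →ₗ[ℝ] V)
    (hπ : π = (LinearMap.range L₁ ⊓ LinearMap.range L₂).subtype ∘ₗ
        (Submodule.orthogonalProjection (LinearMap.range L₁ ⊓ LinearMap.range L₂)).toLinearMap)
    (N : V →ₗ[ℝ] V)
    (hN : IsMoorePenroseInv (π ∘ₗ (f₁ • M₁ + f₂ • M₂) ∘ₗ π) N) :
    IsLeast {r : ℝ | ∃ E₁ E₂ : V, f₁ • E₁ + f₂ • E₂ = E₀ ∧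
        r = f₁ * ⟪E₁, L₁ E₁⟫ + f₂ * ⟪E₂, L₂ E₂⟫}
      ⟪π E₀, N (π E₀)⟫ := by
  set W : Submodule ℝ V := LinearMap.range L₁ ⊓ LinearMap.range L₂ with hWdef
  set G : V →ₗ[ℝ] V := f₁ • M₁ + f₂ • M₂ with hGdef
  set B : V →ₗ[ℝ] V := π ∘ₗ G ∘ₗ π with hBdef
  -- π facts
  have hπapp : ∀ x, π x = ↑(Submodule.orthogonalProjection W x) := by
    intro x; rw [hπ]; rfl
  have hπmem : ∀ x, π x ∈ W := by
    intro x; rw [hπapp]; exact (Submodule.orthogonalProjection W x).2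
  have hπid : ∀ x ∈ W, π x = x := by
    intro x hx; rw [hπapp]; exact Submodule.starProjection_eq_self_iff.mpr hx
  have hπsym : π.IsSymmetric := by
    intro x y; rw [hπapp, hπapp]
    exact Submodule.inner_starProjection_left_eq_right W x y
  -- M facts
  have hM₁sym : M₁.IsSymmetric := mp_symm L₁ M₁ hL₁ hM₁
  have hM₂sym : M₂.IsSymmetric := mp_symm L₂ M₂ hL₂ hM₂
  have hLM₁ : ∀ u ∈ LinearMap.range L₁, L₁ (M₁ u) = u := by
    rintro u ⟨v, rfl⟩; exact LinearMap.ext_iff.mp hM₁.1 v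
  have hLM₂ : ∀ u ∈ LinearMap.range L₂, L₂ (M₂ u) = u := by
    rintro u ⟨v, rfl⟩; exact LinearMap.ext_iff.mp hM₂.1 v
  have hM₁pos : ∀ x, 0 ≤ ⟪x, M₁ x⟫ := by
    intro x
    have e : M₁ (L₁ (M₁ x)) = M₁ x := LinearMap.ext_iff.mp hM₁.2.1 x
    calc (0:ℝ) ≤ ⟪M₁ x, L₁ (M₁ x)⟫ := hL₁pos _
    _ = ⟪x, M₁ (L₁ (M₁ x))⟫ := hM₁sym x (L₁ (M₁ x))
    _ = ⟪x, M₁ x⟫ := by rw [e]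
  have hM₂pos : ∀ x, 0 ≤ ⟪x, M₂ x⟫ := by
    intro x
    have e : M₂ (L₂ (M₂ x)) = M₂ x := LinearMap.ext_iff.mp hM₂.2.1 x
    calc (0:ℝ) ≤ ⟪M₂ x, L₂ (M₂ x)⟫ := hL₂pos _
    _ = ⟪x, M₂ (L₂ (M₂ x))⟫ := hM₂sym x (L₂ (M₂ x))
    _ = ⟪x, M₂ x⟫ := by rw [e]
  have hGapp : ∀ x, G x = f₁ • M₁ x + f₂ • M₂ x := by intro x; rfl
  have hGsym : G.IsSymmetric := by
    intro x y
    simp only [hGapp, inner_add_left, inner_add_right, real_inner_smul_left,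
      real_inner_smul_right, hM₁sym x y, hM₂sym x y]
  have hGinner : ∀ x, ⟪x, G x⟫ = f₁ * ⟪x, M₁ x⟫ + f₂ * ⟪x, M₂ x⟫ := by
    intro x; simp [hGapp, inner_add_right, real_inner_smul_right]
  have hBapp : ∀ x, B x = π (G (π x)) := by intro x; rfl
  have hBsym : B.IsSymmetric := by
    intro x y
    rw [hBapp, hBapp, hπsym, hGsym, hπsym]
  have hBW : ∀ x, B x ∈ W := fun x => hπmem _
  have hBinnerW : ∀ w ∈ W, ⟪w, B w⟫ = f₁ * ⟪w, M₁ w⟫ + f₂ * ⟪w, M₂ w⟫ := by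
    intro w hw
    rw [hBapp, ← hπsym, hπid w hw, hGinner]
  -- B is surjective onto W
  have hBsurj : ∀ u ∈ W, ∃ w, B w = u := by
    intro u hu
    set B' : W →ₗ[ℝ] W := LinearMap.codRestrict W (B ∘ₗ W.subtype) (fun w => hBW _) with hB'
    have hinj : Function.Injective B' := by
      rw [← LinearMap.ker_eq_bot, LinearMap.ker_eq_bot']
      intro w hw
      have hw0 : B (↑w) = 0 := by
        have := congrArg (Subtype.val) hw
        simpa [hB'] using this
      have hz : f₁ * ⟪(w:V), M₁ w⟫ + f₂ * ⟪(w:V), M₂ w⟫ = 0 := by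
        rw [← hBinnerW _ w.2, hw0, inner_zero_right]
      have h1 : ⟪(w:V), M₁ (w:V)⟫ = 0 := by
        nlinarith [hM₁pos (w:V), hM₂pos (w:V), mul_nonneg hf₁.le (hM₁pos (w:V)),
          mul_nonneg hf₂.le (hM₂pos (w:V))]
      have hMw : M₁ (w:V) = 0 := psd_zero M₁ hM₁sym hM₁pos h1
      have hwr : (w:V) ∈ LinearMap.range L₁ := w.2.1
      have : (w:V) = 0 := by rw [← hLM₁ _ hwr, hMw, map_zero]
      exact Subtype.ext this
    have hsurj : Function.Surjective B' :=
      (LinearMap.injective_iff_surjective).mp hinj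
    obtain ⟨w, hw⟩ := hsurj ⟨u, hu⟩
    exact ⟨↑w, congrArg Subtype.val hw⟩
  have hBNB : ∀ u ∈ W, B (N u) = u := by
    intro u hu
    obtain ⟨w, rfl⟩ := hBsurj u hu
    exact LinearMap.ext_iff.mp hN.1 w
  have hNsym : N.IsSymmetric := mp_symm B N hBsym hN
  have hcomm : N ∘ₗ B = B ∘ₗ N := by
    have h1 : LinearMap.adjoint (B ∘ₗ N) = N ∘ₗ B := by
      rw [LinearMap.adjoint_comp, sym_adj hBsym, sym_adj hNsym]
    rw [← h1]
    exact sym_adj hN.2.2.1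
  have hNW : ∀ x, N x ∈ W := by
    intro x
    have e1 : N (B (N x)) = N x := LinearMap.ext_iff.mp hN.2.1 x
    have e2 : N (B (N x)) = B (N (N x)) := LinearMap.ext_iff.mp hcomm (N x)
    rw [← e1, e2]; exact hBW _
  -- the candidate point
  set u : V := π E₀ with hu
  set a : V := N u with ha
  have haW : a ∈ W := hNW u
  have haπ : π a = a := hπid a haW
  have hBa : B a = u := hBNB u (hπmem E₀)
  have haG : ⟪a, G a⟫ = ⟪u, N u⟫ := by
    calc ⟪a, G a⟫ = ⟪π a, G (π a)⟫ := by rw [haπ]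
    _ = ⟪a, π (G (π a))⟫ := hπsym a (G (π a))
    _ = ⟪a, B a⟫ := by rw [← hBapp]
    _ = ⟪a, u⟫ := by rw [hBa]
    _ = ⟪u, N u⟫ := by rw [ha, real_inner_comm]
  have haM₁ : L₁ (M₁ a) = a := hLM₁ a haW.1
  have haM₂ : L₂ (M₂ a) = a := hLM₂ a haW.2
  have haE₀ : ⟪a, E₀⟫ = ⟪u, N u⟫ := by
    calc ⟪a, E₀⟫ = ⟪π a, E₀⟫ := by rw [haπ]
    _ = ⟪a, π E₀⟫ := hπsym a E₀
    _ = ⟪u, N u⟫ := by rw [ha, real_inner_comm]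
  constructor
  · -- membership: construct minimizer
    set d : V := E₀ - G a with hd
    have hπd : π d = 0 := by
      have : π (G a) = B a := by rw [hBapp, haπ]
      rw [hd, map_sub, this, hBa, sub_self]
    have hdW : d ∈ Wᗮ := by
      have h1 : d - ↑(Submodule.orthogonalProjection W d) ∈ Wᗮ :=
        Submodule.sub_starProjection_mem_orthogonal (K := W) d
      rwa [← hπapp, hπd, sub_zero] at h1
    have hWperp : Wᗮ = LinearMap.ker L₁ ⊔ LinearMap.ker L₂ := by
      have e1 : LinearMap.range L₁ = (LinearMap.ker L₁)ᗮ := by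
        rw [ker_eq_range_orth L₁ hL₁, Submodule.orthogonal_orthogonal]
      have e2 : LinearMap.range L₂ = (LinearMap.ker L₂)ᗮ := by
        rw [ker_eq_range_orth L₂ hL₂, Submodule.orthogonal_orthogonal]
      rw [hWdef, e1, e2, Submodule.inf_orthogonal, Submodule.orthogonal_orthogonal]
    rw [hWperp] at hdW
    obtain ⟨k₁, hk₁, k₂, hk₂, hkd⟩ := Submodule.mem_sup.mp hdW
    refine ⟨M₁ a + f₁⁻¹ • k₁, M₂ a + f₂⁻¹ • k₂, ?_, ?_⟩
    · have : f₁ • (M₁ a + f₁⁻¹ • k₁) + f₂ • (M₂ a + f₂⁻¹ • k₂)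
          = (f₁ • M₁ a + f₂ • M₂ a) + (k₁ + k₂) := by
        rw [smul_add, smul_add, smul_smul, smul_smul,
          mul_inv_cancel₀ hf₁.ne', mul_inv_cancel₀ hf₂.ne', one_smul, one_smul]
        abel
      rw [this, ← hGapp, hkd, hd]; abel
    · have hk₁0 : L₁ k₁ = 0 := hk₁
      have hk₂0 : L₂ k₂ = 0 := hk₂
      have hka₁ : ⟪k₁, a⟫ = 0 := by
        rw [ker_eq_range_orth L₁ hL₁] at hk₁
        rw [real_inner_comm]
        exact (Submodule.mem_orthogonal _ _).mp hk₁ a haW.1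
      have hka₂ : ⟪k₂, a⟫ = 0 := by
        rw [ker_eq_range_orth L₂ hL₂] at hk₂
        rw [real_inner_comm]
        exact (Submodule.mem_orthogonal _ _).mp hk₂ a haW.2
      have hv₁ : ⟪M₁ a + f₁⁻¹ • k₁, L₁ (M₁ a + f₁⁻¹ • k₁)⟫ = ⟪a, M₁ a⟫ := by
        rw [map_add, map_smul, hk₁0, smul_zero, add_zero, haM₁, inner_add_left,
          real_inner_smul_left, hka₁, mul_zero, add_zero, real_inner_comm]
      have hv₂ : ⟪M₂ a + f₂⁻¹ • k₂, L₂ (M₂ a + f₂⁻¹ • k₂)⟫ = ⟪a, M₂ a⟫ := by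
        rw [map_add, map_smul, hk₂0, smul_zero, add_zero, haM₂, inner_add_left,
          real_inner_smul_left, hka₂, mul_zero, add_zero, real_inner_comm]
      rw [hv₁, hv₂, ← hGinner, haG]
  · -- lower bound
    rintro r ⟨E₁, E₂, hc, rfl⟩
    have key₁ : 2 * ⟪a, E₁⟫ - ⟪a, M₁ a⟫ ≤ ⟪E₁, L₁ E₁⟫ := by
      have h0 := hL₁pos (E₁ - M₁ a)
      have e : ⟪E₁ - M₁ a, L₁ (E₁ - M₁ a)⟫
          = ⟪E₁, L₁ E₁⟫ - 2 * ⟪a, E₁⟫ + ⟪a, M₁ a⟫ := by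
        rw [map_sub, inner_sub_left, inner_sub_right, inner_sub_right, haM₁]
        have c2 : ⟪E₁, a⟫ = ⟪a, E₁⟫ := real_inner_comm _ _
        have c3 : ⟪M₁ a, a⟫ = ⟪a, M₁ a⟫ := real_inner_comm _ _
        rw [c2, c3]
        have c1' : ⟪M₁ a, L₁ E₁⟫ = ⟪a, E₁⟫ := by
          rw [← hL₁ (M₁ a) E₁, haM₁]
        rw [c1']; ring
      linarith [e ▸ h0]
    have key₂ : 2 * ⟪a, E₂⟫ - ⟪a, M₂ a⟫ ≤ ⟪E₂, L₂ E₂⟫ := by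
      have h0 := hL₂pos (E₂ - M₂ a)
      have e : ⟪E₂ - M₂ a, L₂ (E₂ - M₂ a)⟫
          = ⟪E₂, L₂ E₂⟫ - 2 * ⟪a, E₂⟫ + ⟪a, M₂ a⟫ := by
        rw [map_sub, inner_sub_left, inner_sub_right, inner_sub_right, haM₂]
        have c2 : ⟪E₂, a⟫ = ⟪a, E₂⟫ := real_inner_comm _ _
        have c3 : ⟪M₂ a, a⟫ = ⟪a, M₂ a⟫ := real_inner_comm _ _
        rw [c2, c3]
        have c1' : ⟪M₂ a, L₂ E₂⟫ = ⟪a, E₂⟫ := by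
          rw [← hL₂ (M₂ a) E₂, haM₂]
        rw [c1']; ring
      linarith [e ▸ h0]
    have hsum : f₁ * ⟪a, E₁⟫ + f₂ * ⟪a, E₂⟫ = ⟪u, N u⟫ := by
      rw [← haE₀, ← hc, inner_add_right, real_inner_smul_right, real_inner_smul_right]
    have hMsum : f₁ * ⟪a, M₁ a⟫ + f₂ * ⟪a, M₂ a⟫ = ⟪u, N u⟫ := by
      rw [← hGinner, haG]
    have t1 : f₁ * (2 * ⟪a, E₁⟫ - ⟪a, M₁ a⟫) ≤ f₁ * ⟪E₁, L₁ E₁⟫ :=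
      mul_le_mul_of_nonneg_left key₁ hf₁.le
    have t2 : f₂ * (2 * ⟪a, E₂⟫ - ⟪a, M₂ a⟫) ≤ f₂ * ⟪E₂, L₂ E₂⟫ :=
      mul_le_mul_of_nonneg_left key₂ hf₂.le
    have : ⟪u, N u⟫ ≤ f₁ * ⟪E₁, L₁ E₁⟫ + f₂ * ⟪E₂, L₂ E₂⟫ := by nlinarith
    simpa [hu, ha] using this
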